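/- Let K be a closed cone in a real normed space, let 𝒜 be a bounded family of homogeneous, order-preserving maps on K, and let m ∈ ℕ. If there exist f ∈ 𝒜^m, a nonzero x ∈ K, and α > 0 such that f(x) ≥ α^m x (in the cone order), then the generalized spectral radius satisfies r(𝒜) ≥ α. -/

import Mathlib

open Filter Topology Set

noncomputable section

/-- A wedge in a real normed space: a convex set closed under positive scalar multiplication. -/
def IsWedge {X : Type*} [NormedAddCommGroup X] [NormedSpace ℝ X] (W : Set X) : Prop :=
  Convex ℝ W ∧ ∀ c : ℝ, 0 < c → ∀ x ∈ W, c • x ∈ W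

/-- A closed cone: closed, convex, closed under positive scalar multiplication, K ∩ (−K) = {0}. -/
def IsClosedCone {X : Type*} [NormedAddCommGroup X] [NormedSpace ℝ X] (K : Set X) : Prop :=
  IsClosed K ∧ Convex ℝ K ∧ (∀ c : ℝ, 0 < c → ∀ x ∈ K, c • x ∈ K) ∧ K ∩ (-K) = {0}

/-- A polyhedral cone: intersection of finitely many closed halfspaces through the origin. -/
def IsPolyhedralCone {X : Type*} [NormedAddCommGroup X] [NormedSpace ℝ X] (K : Set X) : Prop :=
  ∃ (k : ℕ) (φ : Fin k → (X →ₗ[ℝ] ℝ)), K = {x | ∀ i, 0 ≤ φ i x}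

/-- `f` maps `W` into itself and is positively homogeneous on `W`. -/
def HomogOn {X : Type*} [NormedAddCommGroup X] [NormedSpace ℝ X] (f : X → X) (W : Set X) : Prop :=
  Set.MapsTo f W W ∧ ∀ c : ℝ, 0 < c → ∀ x ∈ W, f (c • x) = c • f x

/-- `f` is order-preserving with respect to the order induced by the cone `K`. -/
def OrderPresOn {X : Type*} [NormedAddCommGroup X] [NormedSpace ℝ X] (f : X → X) (K : Set X) : Prop :=
  ∀ x ∈ K, ∀ y ∈ K, y - x ∈ K → f y - f x ∈ K

/-- `f` is subadditive on `K`: f(x+y) ≤ f(x)+f(y) in the cone order. -/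
def SubaddOn {X : Type*} [NormedAddCommGroup X] [NormedSpace ℝ X] (f : X → X) (K : Set X) : Prop :=
  ∀ x ∈ K, ∀ y ∈ K, (f x + f y) - f (x + y) ∈ K

/-- The norm of a homogeneous map on `W`: sup of ‖f x‖ over unit vectors of `W`. -/
def opNormW {X : Type*} [NormedAddCommGroup X] (f : X → X) (W : Set X) : ℝ :=
  sSup ((fun x => ‖f x‖) '' {x ∈ W | ‖x‖ = 1})

/-- A bounded homogeneous map on `W`. -/
def BoundedMapOn {X : Type*} [NormedAddCommGroup X] (f : X → X) (W : Set X) : Prop :=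
  ∃ C : ℝ, ∀ x ∈ W, ‖f x‖ ≤ C * ‖x‖

/-- A bounded family of homogeneous maps on `W`. -/
def BoundedFamOn {X : Type*} [NormedAddCommGroup X] (A : Set (X → X)) (W : Set X) : Prop :=
  ∃ C : ℝ, ∀ f ∈ A, ∀ x ∈ W, ‖f x‖ ≤ C * ‖x‖

/-- `famPow A m` = 𝒜^m, the set of m-fold compositions of maps from `A` (with 𝒜^0 = {id}). -/
def famPow {X : Type*} (A : Set (X → X)) : ℕ → Set (X → X)
  | 0 => {id}
  | m + 1 => {h | ∃ f ∈ A, ∃ g ∈ famPow A m, h = f ∘ g}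

/-- The composition of two families of maps. -/
def compFam {X : Type*} (A B : Set (X → X)) : Set (X → X) :=
  {h | ∃ f ∈ A, ∃ g ∈ B, h = f ∘ g}

/-- The Bonsall cone spectral radius r(f) = inf_{n>0} ‖f^n‖^{1/n}. -/
def coneSpecRad {X : Type*} [NormedAddCommGroup X] (f : X → X) (W : Set X) : ℝ :=
  ⨅ n : ℕ+, (opNormW (f^[(n : ℕ)]) W) ^ (((n : ℕ) : ℝ)⁻¹)

/-- sup_{f ∈ 𝒜^m} ‖f‖^{1/m}. -/
def jointTerm {X : Type*} [NormedAddCommGroup X] (A : Set (X → X)) (W : Set X) (m : ℕ) : ℝ :=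
  sSup ((fun f => (opNormW f W) ^ ((m : ℝ)⁻¹)) '' famPow A m)

/-- sup_{f ∈ 𝒜^m} r(f)^{1/m}. -/
def genTerm {X : Type*} [NormedAddCommGroup X] (A : Set (X → X)) (W : Set X) (m : ℕ) : ℝ :=
  sSup ((fun f => (coneSpecRad f W) ^ ((m : ℝ)⁻¹)) '' famPow A m)

/-- The joint spectral radius r̂(𝒜) = inf_{m>0} sup_{f ∈ 𝒜^m} ‖f‖^{1/m}. -/
def jointRad {X : Type*} [NormedAddCommGroup X] (A : Set (X → X)) (W : Set X) : ℝ :=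
  ⨅ m : ℕ+, jointTerm A W (m : ℕ)

/-- The generalized spectral radius r(𝒜) = sup_{m>0} sup_{f ∈ 𝒜^m} r(f)^{1/m}. -/
def genRad {X : Type*} [NormedAddCommGroup X] (A : Set (X → X)) (W : Set X) : ℝ :=
  ⨆ m : ℕ+, genTerm A W (m : ℕ)

/-- β_m = inf_{f ∈ 𝒜^m} ‖f‖. -/
def subBeta {X : Type*} [NormedAddCommGroup X] (A : Set (X → X)) (W : Set X) (m : ℕ) : ℝ :=
  sInf ((fun f => opNormW f W) '' famPow A m)

/-- γ_m = inf_{f ∈ 𝒜^m} r(f). -/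
def subGamma {X : Type*} [NormedAddCommGroup X] (A : Set (X → X)) (W : Set X) (m : ℕ) : ℝ :=
  sInf ((fun f => coneSpecRad f W) '' famPow A m)

/-- F_m^d = f_m ∘ ⋯ ∘ f_1 for a sequence d of maps. -/
def seqComp {X : Type*} (d : ℕ → X → X) : ℕ → X → X
  | 0 => id
  | m + 1 => d m ∘ seqComp d m

/-- The standard cone ℝⁿ_{≥0}. -/
def stdCone (n : ℕ) : Set (Fin n → ℝ) := {x | ∀ i, 0 ≤ x i}

/-- The closed face F_J of the standard cone. -/
def stdFace {n : ℕ} (J : Set (Fin n)) : Set (Fin n → ℝ) :=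
  {x | (∀ i, 0 ≤ x i) ∧ ∀ i ∉ J, x i = 0}

/-- A family of maps on ℝⁿ_{≥0} is irreducible if no non-trivial closed face is invariant
under every member of the family. -/
def IrreducibleFam {n : ℕ} (A : Set ((Fin n → ℝ) → Fin n → ℝ)) : Prop :=
  ¬ ∃ J : Set (Fin n), J.Nonempty ∧ J ≠ Set.univ ∧ ∀ f ∈ A, Set.MapsTo f (stdFace J) (stdFace J)

section AuxLemmas

variable {X : Type*} [NormedAddCommGroup X] [NormedSpace ℝ X]

lemma aux_cone_zero_mem {K : Set X} (hK : IsClosedCone K) : (0 : X) ∈ K := by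
  have h : (0 : X) ∈ K ∩ (-K) := by rw [hK.2.2.2]; rfl
  exact h.1

lemma aux_cone_add_mem {K : Set X} (hK : IsClosedCone K) {a b : X}
    (ha : a ∈ K) (hb : b ∈ K) : a + b ∈ K := by
  have h : (1/2 : ℝ) • a + (1/2 : ℝ) • b ∈ K :=
    hK.2.1 ha hb (by norm_num) (by norm_num) (by norm_num)
  have h2 := hK.2.2.1 2 (by norm_num) _ h
  have : (2:ℝ) • ((1/2 : ℝ) • a + (1/2 : ℝ) • b) = a + b := by
    rw [smul_add, smul_smul, smul_smul]; norm_num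
  rwa [this] at h2

lemma aux_famPow_props {K : Set X} {A : Set (X → X)}
    (hA : ∀ f ∈ A, HomogOn f K ∧ OrderPresOn f K) :
    ∀ p, ∀ g ∈ famPow A p, HomogOn g K ∧ OrderPresOn g K := by
  intro p
  induction p with
  | zero =>
    intro g hg
    have : g = id := hg
    subst this
    exact ⟨⟨fun z hz => hz, fun c hc z hz => rfl⟩, fun a ha b hb hab => hab⟩
  | succ p ih =>
    rintro g ⟨f0, hf0, g0, hg0, rfl⟩
    obtain ⟨⟨hf0m, hf0h⟩, hf0o⟩ := hA f0 hf0
    obtain ⟨⟨hg0m, hg0h⟩, hg0o⟩ := ih g0 hg0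
    refine ⟨⟨hf0m.comp hg0m, fun c hc z hz => ?_⟩, fun a ha b hb hab => ?_⟩
    · show f0 (g0 (c • z)) = c • f0 (g0 z)
      rw [hg0h c hc z hz, hf0h c hc _ (hg0m hz)]
    · exact hf0o _ (hg0m ha) _ (hg0m hb) (hg0o a ha b hb hab)

lemma aux_famPow_bound {K : Set X} {A : Set (X → X)} {C : ℝ} (hC1 : 1 ≤ C)
    (hA : ∀ f ∈ A, Set.MapsTo f K K)
    (hb : ∀ f ∈ A, ∀ x ∈ K, ‖f x‖ ≤ C * ‖x‖) :
    ∀ p, ∀ g ∈ famPow A p, ∀ x ∈ K, ‖g x‖ ≤ C ^ p * ‖x‖ := by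
  have hC0 : (0:ℝ) ≤ C := le_trans zero_le_one hC1
  intro p
  induction p with
  | zero =>
    intro g hg x hx
    have : g = id := hg
    subst this
    simp
  | succ p ih =>
    rintro g ⟨f0, hf0, g0, hg0, rfl⟩ x hx
    have hmap : ∀ q, ∀ g ∈ famPow A q, Set.MapsTo g K K := by
      intro q
      induction q with
      | zero => intro g hg; have : g = id := hg; subst this; exact fun z hz => hz
      | succ q ihq =>
        rintro g ⟨f1, hf1, g1, hg1, rfl⟩
        exact (hA f1 hf1).comp (ihq g1 hg1)
    calc ‖f0 (g0 x)‖ ≤ C * ‖g0 x‖ := hb f0 hf0 _ (hmap p g0 hg0 hx)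
      _ ≤ C * (C ^ p * ‖x‖) := by
          exact mul_le_mul_of_nonneg_left (ih g0 hg0 x hx) hC0
      _ = C ^ (p+1) * ‖x‖ := by ring

lemma aux_famPow_mapsTo {K : Set X} {A : Set (X → X)}
    (hA : ∀ f ∈ A, HomogOn f K ∧ OrderPresOn f K) :
    ∀ p, ∀ g ∈ famPow A p, Set.MapsTo g K K :=
  fun p g hg => (aux_famPow_props hA p g hg).1.1

lemma aux_famPow_comp {A : Set (X → X)} :
    ∀ a b : ℕ, ∀ g ∈ famPow A a, ∀ h ∈ famPow A b, g ∘ h ∈ famPow A (a + b) := by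
  intro a
  induction a with
  | zero =>
    intro b g hg h hh
    have : g = id := hg
    subst this
    simpa using hh
  | succ a iha =>
    rintro b g ⟨f0, hf0, g0, hg0, rfl⟩ h hh
    have : a + 1 + b = (a + b) + 1 := by omega
    rw [this]
    exact ⟨f0, hf0, g0 ∘ h, iha b g0 hg0 h hh, rfl⟩

lemma aux_iterate_mem_famPow {A : Set (X → X)} {m : ℕ} {f : X → X}
    (hf : f ∈ famPow A m) : ∀ k, f^[k] ∈ famPow A (k * m) := by
  intro k
  induction k with
  | zero =>
    rw [Nat.zero_mul]
    exact rfl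
  | succ k ihk =>
    have h := aux_famPow_comp m (k * m) f hf f^[k] ihk
    have he : (k + 1) * m = m + k * m := by ring
    rw [Function.iterate_succ', he]
    exact h

lemma aux_iterate_ge {K : Set X} (hK : IsClosedCone K) {f : X → X}
    (hfh : HomogOn f K) (hfo : OrderPresOn f K)
    {x : X} (hx : x ∈ K) {β : ℝ} (hβ : 0 < β) (h : f x - β • x ∈ K) :
    ∀ n, f^[n] x ∈ K ∧ f^[n] x - β ^ n • x ∈ K := by
  intro n
  induction n with
  | zero =>
    refine ⟨hx, ?_⟩
    simp [aux_cone_zero_mem hK]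
  | succ n ihn =>
    obtain ⟨hy, hdiff⟩ := ihn
    have hβn : 0 < β ^ n := pow_pos hβ n
    have hβnx : β ^ n • x ∈ K := hK.2.2.1 _ hβn x hx
    have h1 : f (f^[n] x) - f (β ^ n • x) ∈ K := hfo _ hβnx _ hy hdiff
    have h2 : f (β ^ n • x) = β ^ n • f x := hfh.2 _ hβn x hx
    have h3 : β ^ n • (f x - β • x) ∈ K := hK.2.2.1 _ hβn _ h
    have h4 : β ^ n • (f x - β • x) = β ^ n • f x - β ^ (n+1) • x := by
      rw [smul_sub, smul_smul]; ring_nf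
    have h5 : f (f^[n] x) - β ^ (n+1) • x ∈ K := by
      have := aux_cone_add_mem hK h1 (h4 ▸ h3)
      rw [h2] at this
      convert this using 1
      abel
    refine ⟨?_, ?_⟩
    · rw [Function.iterate_succ_apply']
      exact hfh.1 hy
    · rw [Function.iterate_succ_apply']
      exact h5

lemma aux_opNormW_nonneg {W : Set X} (f : X → X) : 0 ≤ opNormW f W :=
  Real.sSup_nonneg fun y hy => by
    obtain ⟨z, _, rfl⟩ := hy
    exact norm_nonneg _

end AuxLemmas

theorem statement3 {X : Type*} [NormedAddCommGroup X] [NormedSpace ℝ X]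
    (K : Set X) (hK : IsClosedCone K)
    (A : Set (X → X)) (hA : ∀ f ∈ A, HomogOn f K ∧ OrderPresOn f K)
    (hbdd : BoundedFamOn A K)
    (m : ℕ) (hm : 0 < m) (f : X → X) (hf : f ∈ famPow A m)
    (x : X) (hx : x ∈ K) (hx0 : x ≠ 0)
    (α : ℝ) (hα : 0 < α) (hge : f x - α ^ m • x ∈ K) :
    α ≤ genRad A K := by
  classical
  obtain ⟨C0, hC0⟩ := hbdd
  set C : ℝ := max C0 1 with hCdef
  have hC1 : 1 ≤ C := le_max_right _ _
  have hC0' : (0:ℝ) < C := lt_of_lt_of_le one_pos hC1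
  have hb : ∀ g ∈ A, ∀ z ∈ K, ‖g z‖ ≤ C * ‖z‖ := fun g hg z hz =>
    (hC0 g hg z hz).trans (mul_le_mul_of_nonneg_right (le_max_left _ _) (norm_nonneg _))
  have hbound := aux_famPow_bound hC1 (fun g hg => (hA g hg).1.1) hb
  have hprops := aux_famPow_props hA
  -- the set T = x + K and its distance to 0
  set T : Set X := {y : X | y - x ∈ K} with hTdef
  have hTclosed : IsClosed T := by
    have : T = (fun y => y - x) ⁻¹' K := rfl
    rw [this]
    exact hK.1.preimage (continuous_id.sub continuous_const)
  have hxT : x ∈ T := by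
    show x - x ∈ K
    rw [sub_self]; exact aux_cone_zero_mem hK
  have h0T : (0:X) ∉ T := by
    intro h0
    have hnx0 : (0:X) - x ∈ K := h0
    rw [zero_sub] at hnx0
    have hnx : -x ∈ K := hnx0
    have : x ∈ K ∩ (-K) := ⟨hx, by simpa using hnx⟩
    rw [hK.2.2.2] at this
    exact hx0 this
  set δ : ℝ := Metric.infDist 0 T with hδdef
  have hδpos : 0 < δ := (hTclosed.notMem_iff_infDist_pos ⟨x, hxT⟩).1 h0T
  have hδle : ∀ y ∈ T, δ ≤ ‖y‖ := by
    intro y hy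
    have := Metric.infDist_le_dist_of_mem (x := (0:X)) hy
    rwa [dist_zero_left] at this
  have hxnorm : 0 < ‖x‖ := norm_pos_iff.2 hx0
  have hδx : δ ≤ ‖x‖ := hδle x hxT
  set c : ℝ := δ / ‖x‖ with hcdef
  have hc0 : 0 < c := div_pos hδpos hxnorm
  have hc1 : c ≤ 1 := (div_le_one hxnorm).2 hδx
  -- iterate inequality
  have hfh := (hprops m f hf).1
  have hfo := (hprops m f hf).2
  have hiter := aux_iterate_ge hK hfh hfo hx (pow_pos hα m) hge
  -- norm lower bound for iterates applied to x
  have hnormlb : ∀ j : ℕ, α ^ (m * j) * δ ≤ ‖f^[j] x‖ := by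
    intro j
    set β : ℝ := (α ^ m) ^ j with hβdef
    have hβ : 0 < β := pow_pos (pow_pos hα m) j
    have h1 : f^[j] x - β • x ∈ K := (hiter j).2
    have h2 : β⁻¹ • f^[j] x ∈ T := by
      show β⁻¹ • f^[j] x - x ∈ K
      have h3 := hK.2.2.1 β⁻¹ (inv_pos.2 hβ) _ h1
      have h4 : β⁻¹ • (f^[j] x - β • x) = β⁻¹ • f^[j] x - x := by
        rw [smul_sub, smul_smul, inv_mul_cancel₀ (ne_of_gt hβ), one_smul]
      rwa [h4] at h3
    have h5 := hδle _ h2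
    rw [norm_smul, Real.norm_eq_abs, abs_of_pos (inv_pos.2 hβ)] at h5
    have h6 : β * δ ≤ ‖f^[j] x‖ := by
      rw [← mul_le_mul_iff_right₀ (inv_pos.2 hβ), ← mul_assoc, inv_mul_cancel₀ (ne_of_gt hβ), one_mul]
      exact h5
    have h7 : β = α ^ (m * j) := by rw [hβdef, ← pow_mul]
    rwa [h7] at h6
  -- opNormW lower bound
  set xhat : X := ‖x‖⁻¹ • x with hxhatdef
  have hxhatK : xhat ∈ K := hK.2.2.1 _ (inv_pos.2 hxnorm) x hx
  have hxhatnorm : ‖xhat‖ = 1 := by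
    rw [hxhatdef, norm_smul, Real.norm_eq_abs, abs_of_pos (inv_pos.2 hxnorm),
      inv_mul_cancel₀ (ne_of_gt hxnorm)]
  have hoplb : ∀ j : ℕ, α ^ (m * j) * c ≤ opNormW f^[j] K := by
    intro j
    have hjmem : f^[j] ∈ famPow A (j * m) := aux_iterate_mem_famPow hf j
    have hjh := (hprops (j * m) _ hjmem).1
    have hval : f^[j] xhat = ‖x‖⁻¹ • f^[j] x := hjh.2 _ (inv_pos.2 hxnorm) x hx
    have hnorm : α ^ (m * j) * c ≤ ‖f^[j] xhat‖ := by
      rw [hval, norm_smul, Real.norm_eq_abs, abs_of_pos (inv_pos.2 hxnorm)]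
      calc α ^ (m * j) * c = ‖x‖⁻¹ * (α ^ (m * j) * δ) := by
            rw [hcdef]; ring
        _ ≤ ‖x‖⁻¹ * ‖f^[j] x‖ :=
            mul_le_mul_of_nonneg_left (hnormlb j) (le_of_lt (inv_pos.2 hxnorm))
    have hbdd' : BddAbove ((fun z => ‖f^[j] z‖) '' {z ∈ K | ‖z‖ = 1}) := by
      refine ⟨C ^ (j * m), ?_⟩
      rintro y ⟨z, ⟨hzK, hz1⟩, rfl⟩
      have := hbound (j * m) _ hjmem z hzK
      rwa [hz1, mul_one] at this
    have hmem : ‖f^[j] xhat‖ ∈ (fun z => ‖f^[j] z‖) '' {z ∈ K | ‖z‖ = 1} :=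
      ⟨xhat, ⟨hxhatK, hxhatnorm⟩, rfl⟩
    exact le_trans hnorm (le_csSup hbdd' hmem)
  -- coneSpecRad lower bound for f^[k]
  have hcsr : ∀ k : ℕ, 0 < k → α ^ (m * k) * c ≤ coneSpecRad f^[k] K := by
    intro k hk
    apply le_ciInf
    intro n
    have hiteq : (f^[k])^[(n:ℕ)] = f^[k * (n:ℕ)] := (Function.iterate_mul f k n).symm
    rw [hiteq]
    have hlb := hoplb (k * (n:ℕ))
    have hexp : m * (k * (n:ℕ)) = (m * k) * (n:ℕ) := by ring
    rw [hexp, pow_mul] at hlb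
    set a : ℝ := α ^ (m * k) with hadef
    have ha0 : 0 < a := pow_pos hα _
    have hn0 : ((n:ℕ):ℝ) ≠ 0 := Nat.cast_ne_zero.2 (ne_of_gt n.pos)
    have hstep : (a ^ (n:ℕ) * c) ^ (((n:ℕ):ℝ))⁻¹ ≤
        opNormW f^[k * (n:ℕ)] K ^ (((n:ℕ):ℝ))⁻¹ :=
      Real.rpow_le_rpow (by positivity) hlb (by positivity)
    refine le_trans ?_ hstep
    rw [Real.mul_rpow (by positivity) (le_of_lt hc0)]
    have h1 : (a ^ (n:ℕ) : ℝ) ^ (((n:ℕ):ℝ))⁻¹ = a := by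
      rw [← Real.rpow_natCast a (n:ℕ), ← Real.rpow_mul (le_of_lt ha0),
        mul_inv_cancel₀ hn0, Real.rpow_one]
    rw [h1]
    have h2 : c ≤ c ^ (((n:ℕ):ℝ))⁻¹ := by
      have := Real.rpow_le_rpow_of_exponent_ge hc0 hc1
        (show (((n:ℕ):ℝ))⁻¹ ≤ 1 by
          rw [inv_le_one_iff₀]
          right
          exact_mod_cast n.one_le)
      calc c = c ^ (1:ℝ) := (Real.rpow_one c).symm
        _ ≤ c ^ (((n:ℕ):ℝ))⁻¹ := this
    exact mul_le_mul_of_nonneg_left h2 (le_of_lt ha0)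
  -- genTerm bounds: upper bound C for all p ≥ 1
  have hcsr_le : ∀ p : ℕ, ∀ g ∈ famPow A p, coneSpecRad g K ≤ C ^ p := by
    intro p g hg
    have hbb : BddBelow (Set.range fun n : ℕ+ => opNormW g^[(n:ℕ)] K ^ (((n:ℕ):ℝ))⁻¹) := by
      refine ⟨0, ?_⟩
      rintro y ⟨n, rfl⟩
      exact Real.rpow_nonneg (aux_opNormW_nonneg _) _
    have h1 : coneSpecRad g K ≤ opNormW g^[((1:ℕ+):ℕ)] K ^ ((((1:ℕ+):ℕ):ℝ))⁻¹ :=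
      ciInf_le hbb 1
    have h2 : opNormW g^[((1:ℕ+):ℕ)] K ^ ((((1:ℕ+):ℕ):ℝ))⁻¹ = opNormW g K := by
      norm_num
    rw [h2] at h1
    refine le_trans h1 ?_
    apply Real.sSup_le
    · rintro y ⟨z, ⟨hzK, hz1⟩, rfl⟩
      have := hbound p g hg z hzK
      rwa [hz1, mul_one] at this
    · positivity
  have hcsr_nonneg : ∀ g : X → X, 0 ≤ coneSpecRad g K := by
    intro g
    exact Real.iInf_nonneg fun n => Real.rpow_nonneg (aux_opNormW_nonneg _) _
  have hgenTerm_le : ∀ p : ℕ, 0 < p → genTerm A K p ≤ C := by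
    intro p hp
    apply Real.sSup_le
    · rintro y ⟨g, hg, rfl⟩
      have hp0 : ((p:ℕ):ℝ) ≠ 0 := Nat.cast_ne_zero.2 (ne_of_gt hp)
      calc coneSpecRad g K ^ ((p:ℝ))⁻¹ ≤ (C ^ p) ^ ((p:ℝ))⁻¹ :=
            Real.rpow_le_rpow (hcsr_nonneg g) (hcsr_le p g hg) (by positivity)
        _ = C := by
            rw [← Real.rpow_natCast C p, ← Real.rpow_mul (le_of_lt hC0'),
              mul_inv_cancel₀ hp0, Real.rpow_one]
    · exact le_of_lt hC0'
  -- genRad ≥ α * c^(1/(k*m)) for all k ≥ 1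
  have hmain : ∀ k : ℕ, 0 < k → α * c ^ (((k*m : ℕ):ℝ))⁻¹ ≤ genRad A K := by
    intro k hk
    have hkm : 0 < k * m := Nat.mul_pos hk hm
    have hkmem : f^[k] ∈ famPow A (k * m) := aux_iterate_mem_famPow hf k
    -- element of the genTerm image set
    have hel : coneSpecRad f^[k] K ^ (((k*m : ℕ):ℝ))⁻¹ ∈
        (fun g => coneSpecRad g K ^ (((k*m : ℕ):ℝ))⁻¹) '' famPow A (k*m) :=
      ⟨f^[k], hkmem, rfl⟩
    have hbddT : BddAbove ((fun g => coneSpecRad g K ^ (((k*m : ℕ):ℝ))⁻¹) '' famPow A (k*m)) := by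
      refine ⟨C, ?_⟩
      rintro y ⟨g, hg, rfl⟩
      have hp0 : ((k*m:ℕ):ℝ) ≠ 0 := Nat.cast_ne_zero.2 (ne_of_gt hkm)
      calc coneSpecRad g K ^ (((k*m:ℕ):ℝ))⁻¹ ≤ (C ^ (k*m)) ^ (((k*m:ℕ):ℝ))⁻¹ :=
            Real.rpow_le_rpow (hcsr_nonneg g) (hcsr_le (k*m) g hg) (by positivity)
        _ = C := by
            rw [← Real.rpow_natCast C (k*m), ← Real.rpow_mul (le_of_lt hC0'),
              mul_inv_cancel₀ hp0, Real.rpow_one]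
    have hT1 : coneSpecRad f^[k] K ^ (((k*m : ℕ):ℝ))⁻¹ ≤ genTerm A K (k*m) :=
      le_csSup hbddT hel
    have hkm0 : ((k*m:ℕ):ℝ) ≠ 0 := Nat.cast_ne_zero.2 (ne_of_gt hkm)
    have hT2 : α * c ^ (((k*m : ℕ):ℝ))⁻¹ ≤ coneSpecRad f^[k] K ^ (((k*m : ℕ):ℝ))⁻¹ := by
      have hlow := hcsr k hk
      have hlow' : (α ^ (m*k) * c) ^ (((k*m : ℕ):ℝ))⁻¹ ≤
          coneSpecRad f^[k] K ^ (((k*m : ℕ):ℝ))⁻¹ :=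
        Real.rpow_le_rpow (by positivity) hlow (by positivity)
      refine le_trans (le_of_eq ?_) hlow'
      rw [Real.mul_rpow (by positivity) (le_of_lt hc0)]
      congr 1
      have hmk : m * k = k * m := Nat.mul_comm m k
      rw [hmk, ← Real.rpow_natCast α (k*m), ← Real.rpow_mul (le_of_lt hα),
        Nat.cast_mul, mul_inv_cancel₀ (by rw [← Nat.cast_mul]; exact hkm0), Real.rpow_one]
    have hT3 : genTerm A K (k*m) ≤ genRad A K := by
      have hbddR : BddAbove (Set.range fun p : ℕ+ => genTerm A K (p:ℕ)) := by
        refine ⟨C, ?_⟩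
        rintro y ⟨p, rfl⟩
        exact hgenTerm_le (p:ℕ) p.pos
      have := le_ciSup hbddR (⟨k*m, hkm⟩ : ℕ+)
      exact this
    exact le_trans (le_trans hT2 hT1) hT3
  -- limit argument
  have htend : Filter.Tendsto (fun k : ℕ => α * c ^ ((((k+1)*m : ℕ):ℝ))⁻¹)
      Filter.atTop (𝓝 (α * 1)) := by
    have h1 : Filter.Tendsto (fun k : ℕ => (((k+1)*m : ℕ):ℝ)) Filter.atTop Filter.atTop := by
      apply tendsto_natCast_atTop_atTop.comp
      apply Filter.tendsto_atTop_mono (fun k => by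
        calc k ≤ k + 1 := Nat.le_succ k
          _ ≤ (k+1)*m := Nat.le_mul_of_pos_right _ hm)
      exact Filter.tendsto_id
    have h2 : Filter.Tendsto (fun k : ℕ => ((((k+1)*m : ℕ):ℝ))⁻¹) Filter.atTop (𝓝 0) :=
      h1.inv_tendsto_atTop
    have h3 : Filter.Tendsto (fun k : ℕ => c ^ ((((k+1)*m : ℕ):ℝ))⁻¹) Filter.atTop (𝓝 1) := by
      have heq : ∀ k : ℕ, c ^ ((((k+1)*m : ℕ):ℝ))⁻¹ =
          Real.exp (Real.log c * ((((k+1)*m : ℕ):ℝ))⁻¹) := fun k =>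
        Real.rpow_def_of_pos hc0 _
      simp only [heq]
      have h4 := h2.const_mul (Real.log c)
      rw [mul_zero] at h4
      have h5 := (Real.continuous_exp.tendsto 0).comp h4
      simpa [Function.comp_def] using h5
    have := h3.const_mul α
    simpa [mul_comm] using this
  have hev : ∀ k : ℕ, α * c ^ ((((k+1)*m : ℕ):ℝ))⁻¹ ≤ genRad A K := fun k =>
    hmain (k+1) (Nat.succ_pos k)
  have := le_of_tendsto htend (Filter.Eventually.of_forall hev)
  rwa [mul_one] at this
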